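/- Let R be a commutative ring with identity, S a multiplicative subset of R, n a positive integer, and I an ideal of R with I ∩ S = ∅. If I is an S-n-absorbing ideal of R, then the extension I·R_S of I to the localization R_S of R at S is an n-absorbing ideal of R_S. -/

import Mathlib

/-- `I` is `S`-`n`-absorbing with associated element `s`. -/
def IsSNAbsorbingAssoc {R : Type*} [CommRing R] (s : R) (n : ℕ) (I : Ideal R) : Prop :=
  ∀ r : Fin (n + 1) → R, (∏ i, r i) ∈ I →
    ∃ j : Fin (n + 1), s * ∏ i ∈ Finset.univ.erase j, r i ∈ I

/-- `I` is an `S`-`n`-absorbing ideal. -/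
def IsSNAbsorbing {R : Type*} [CommRing R] (S : Set R) (n : ℕ) (I : Ideal R) : Prop :=
  ∃ s ∈ S, IsSNAbsorbingAssoc s n I
/-- `I` is an `n`-absorbing ideal. -/
def IsNAbsorbing {R : Type*} [CommRing R] (n : ℕ) (I : Ideal R) : Prop :=
  ∀ r : Fin (n + 1) → R, (∏ i, r i) ∈ I →
    ∃ j : Fin (n + 1), ∏ i ∈ Finset.univ.erase j, r i ∈ I

private lemma mk'_prod_aux {R : Type*} [CommRing R] (S : Submonoid R) {ι : Type*}
    (F : Finset ι) (a : ι → R) (t : ι → S) :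
    ∏ i ∈ F, IsLocalization.mk' (Localization S) (a i) (t i) =
      IsLocalization.mk' (Localization S) (∏ i ∈ F, a i) (∏ i ∈ F, t i) := by
  classical
  induction F using Finset.induction with
  | empty => simp [IsLocalization.mk'_one]
  | insert _ _ h ih =>
      rw [Finset.prod_insert h, Finset.prod_insert h, Finset.prod_insert h, ih,
        ← IsLocalization.mk'_mul]

theorem stmt_11 {R : Type*} [CommRing R] (S : Submonoid R) (n : ℕ) (hn : 0 < n)
    (I : Ideal R) (hIS : Disjoint (I : Set R) (S : Set R))
    (hI : IsSNAbsorbing (S : Set R) n I) :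
    IsNAbsorbing n (I.map (algebraMap R (Localization S))) := by
  classical
  obtain ⟨s, hsS, hs⟩ := hI
  intro r hr
  choose a t ht using fun i => (let ⟨⟨x, y⟩, h⟩ := IsLocalization.mk'_surjective (M := S) (S := Localization S) (r i); ⟨x, y, h⟩ : ∃ (x : R) (y : S), IsLocalization.mk' (Localization S) x y = r i)
  have hprod : (∏ i, r i)
      = IsLocalization.mk' (Localization S) (∏ i, a i) (∏ i, t i) := by
    rw [← mk'_prod_aux S Finset.univ a t]
    exact Finset.prod_congr rfl fun i _ => (ht i).symm
  rw [hprod, IsLocalization.mk'_mem_map_algebraMap_iff S] at hr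
  obtain ⟨u, huS, hu⟩ := hr
  set r' : Fin (n + 1) → R := Function.update a 0 (u * a 0) with hr'
  have hpr' : (∏ i, r' i) ∈ I := by
    rw [hr', Finset.prod_update_of_mem (Finset.mem_univ 0),
      Finset.sdiff_singleton_eq_erase, mul_assoc,
      Finset.mul_prod_erase Finset.univ a (Finset.mem_univ 0)]
    exact hu
  obtain ⟨j, hj⟩ := hs r' hpr'
  have key : (s * u) * ∏ i ∈ Finset.univ.erase j, a i ∈ I := by
    by_cases h0 : j = 0
    · subst h0
      have : ∏ i ∈ Finset.univ.erase (0 : Fin (n+1)), r' i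
          = ∏ i ∈ Finset.univ.erase (0 : Fin (n+1)), a i := by
        refine Finset.prod_congr rfl fun i hi => ?_
        exact Function.update_of_ne (Finset.ne_of_mem_erase hi) _ _
      rw [this] at hj
      have := I.mul_mem_left u hj
      convert this using 1; ring
    · have h0mem : (0 : Fin (n+1)) ∈ Finset.univ.erase j := by
        simp [Finset.mem_erase, Ne.symm h0]
      have : ∏ i ∈ Finset.univ.erase j, r' i
          = u * ∏ i ∈ Finset.univ.erase j, a i := by
        rw [hr', Finset.prod_update_of_mem h0mem, Finset.sdiff_singleton_eq_erase,
          mul_assoc, Finset.mul_prod_erase _ a h0mem]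
      rw [this] at hj
      convert hj using 1; ring
  have hfin : ∏ i ∈ Finset.univ.erase j, r i
      = IsLocalization.mk' (Localization S) (∏ i ∈ Finset.univ.erase j, a i)
        (∏ i ∈ Finset.univ.erase j, t i) := by
    rw [← mk'_prod_aux S _ a t]
    exact Finset.prod_congr rfl fun i _ => (ht i).symm
  refine ⟨j, ?_⟩
  rw [hfin, IsLocalization.mk'_mem_map_algebraMap_iff S]
  exact ⟨s * u, S.mul_mem hsS huS, key⟩
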